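/- Let f be a polynomial supported on a finite set A ⊂ ℕ^n with Newton polytope conv(A). If f is nonnegative on ℝ^n, then every vertex α of conv(A) lies in (2ℕ)^n and the corresponding coefficient f_α is strictly positive. -/

import Mathlib

open MvPolynomial

open Filter in
/-- For a globally nonnegative polynomial, every vertex (extreme point) of
its Newton polytope is an even lattice point carrying a strictly positive coefficient. -/
theorem newton_polytope_vertices_of_nonneg
    (n : ℕ) (f : MvPolynomial (Fin n) ℝ)
    (hnn : ∀ x : Fin n → ℝ, 0 ≤ eval x f)
    (α : Fin n →₀ ℕ) (hα : α ∈ f.support)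
    (hvert : (fun i => (α i : ℝ)) ∈ Set.extremePoints ℝ
      (convexHull ℝ ((fun (a : Fin n →₀ ℕ) => fun i => (a i : ℝ)) '' ↑f.support))) :
    (∀ i, Even (α i)) ∧ 0 < f.coeff α := by
  classical
  set F : (Fin n →₀ ℕ) → (Fin n → ℝ) := fun a i => (a i : ℝ) with hF
  have hFinj : Function.Injective F := by
    intro a b hab
    ext i
    exact Nat.cast_injective (congrFun hab i)
  -- separation of the extreme point from the other support points
  have hvnot : F α ∉ convexHull ℝ ((F '' ↑f.support) \ {F α}) := by
    have h := (convex_convexHull ℝ (F '' ↑f.support)).mem_extremePoints_iff_mem_diff_convexHull_diff.mp hvert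
    intro hmem
    exact h.2 (convexHull_mono (Set.diff_subset_diff_left (subset_convexHull ℝ _)) hmem)
  have hfin : ((F '' ↑f.support) \ {F α}).Finite :=
    ((f.support.finite_toSet).image F).diff
  obtain ⟨φ, u, hu, hvu⟩ := geometric_hahn_banach_closed_point
    (convex_convexHull ℝ _) (hfin.isClosed_convexHull ℝ) hvnot
  have hsep : ∀ β ∈ f.support, β ≠ α → φ (F β) < φ (F α) := by
    intro β hβ hne
    have hmem : F β ∈ convexHull ℝ ((F '' ↑f.support) \ {F α}) :=
      subset_convexHull ℝ _ ⟨Set.mem_image_of_mem F hβ,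
        fun h => hne (hFinj (Set.mem_singleton_iff.mp h))⟩
    exact (hu _ hmem).trans hvu
  set w : Fin n → ℝ := fun i => φ (Pi.single i 1) with hw
  have hφ : ∀ β : Fin n →₀ ℕ, φ (F β) = ∑ i, (β i : ℝ) * w i := by
    intro β
    have h1 : F β = ∑ i, ((β i : ℝ) • (Pi.single i 1 : Fin n → ℝ)) := by
      funext j
      simp [F, Pi.single_apply, Finset.sum_apply, mul_ite]
    rw [h1, map_sum]
    simp [smul_eq_mul, w]
  -- key asymptotic estimate
  have key : ∀ s : Fin n → ℝ, (∀ i, s i = 1 ∨ s i = -1) →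
      0 ≤ f.coeff α * ∏ i, s i ^ α i := by
    intro s hs
    set c : (Fin n →₀ ℕ) → ℝ := fun β => φ (F β) - φ (F α) with hc
    have hlim : Tendsto (fun t : ℝ => ∑ β ∈ f.support,
        f.coeff β * (∏ i, s i ^ β i) * Real.exp (t * c β)) atTop
        (nhds (f.coeff α * ∏ i, s i ^ α i)) := by
      have hval : (f.coeff α * ∏ i, s i ^ α i) = ∑ β ∈ f.support,
          if β = α then f.coeff β * ∏ i, s i ^ β i else 0 := by
        rw [Finset.sum_ite_eq' f.support α (fun β => f.coeff β * ∏ i, s i ^ β i), if_pos hα]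
      rw [hval]
      apply tendsto_finset_sum
      intro β hβ
      by_cases hβα : β = α
      · subst hβα
        have : (fun t : ℝ => f.coeff β * (∏ i, s i ^ β i) * Real.exp (t * c β))
            = fun _ => f.coeff β * ∏ i, s i ^ β i := by
          funext t; simp [c]
        rw [this, if_pos rfl]
        exact tendsto_const_nhds
      · rw [if_neg hβα]
        have hcneg : c β < 0 := sub_neg.mpr (hsep β hβ hβα)
        have h1 : Tendsto (fun t : ℝ => t * c β) atTop atBot :=
          (tendsto_mul_const_atBot_of_neg hcneg).mpr tendsto_id
        have h2 : Tendsto (fun t : ℝ => Real.exp (t * c β)) atTop (nhds 0) :=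
          Real.tendsto_exp_atBot.comp h1
        have h3 := h2.const_mul (f.coeff β * ∏ i, s i ^ β i)
        simpa using h3
    refine ge_of_tendsto' hlim ?_
    intro t
    have hEeq : (∑ β ∈ f.support, f.coeff β * (∏ i, s i ^ β i) * Real.exp (t * c β))
        = eval (fun i => s i * Real.exp (t * w i)) f * Real.exp (-(t * φ (F α))) := by
      rw [eval_eq', Finset.sum_mul]
      apply Finset.sum_congr rfl
      intro β hβ
      have hprod : (∏ i, (s i * Real.exp (t * w i)) ^ β i)
          = (∏ i, s i ^ β i) * Real.exp (t * φ (F β)) := by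
        rw [hφ]
        rw [Finset.mul_sum, Real.exp_sum, ← Finset.prod_mul_distrib]
        apply Finset.prod_congr rfl
        intro i _
        rw [mul_pow, ← Real.exp_nat_mul]
        congr 1
        ring_nf
      rw [hprod]
      rw [mul_assoc, mul_assoc, mul_assoc]
      congr 1
      congr 1
      rw [← Real.exp_add]
      congr 1
      simp [c]
      ring
    rw [hEeq]
    exact mul_nonneg (hnn _) (Real.exp_nonneg _)
  have hc0 : f.coeff α ≠ 0 := mem_support_iff.mp hα
  have hpos : 0 < f.coeff α := by
    have h1 := key (fun _ => 1) (fun _ => Or.inl rfl)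
    simp only [one_pow, Finset.prod_const_one, mul_one] at h1
    exact lt_of_le_of_ne h1 (Ne.symm hc0)
  refine ⟨?_, hpos⟩
  intro i
  by_contra hodd
  rw [Nat.not_even_iff_odd] at hodd
  have h1 := key (fun j => if j = i then -1 else 1) (fun j => by by_cases h : j = i <;> simp [h])
  have h2 : (∏ j, (if j = i then (-1 : ℝ) else 1) ^ α j) = -1 := by
    rw [Finset.prod_eq_single i]
    · simp [hodd.neg_one_pow]
    · intro j _ hj; simp [hj]
    · intro h; exact absurd (Finset.mem_univ i) h
  rw [h2] at h1
  linarith
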